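/- Let G be a group with an abelian normal subgroup S of index a prime p, such that the set of left Engel elements L(G) is a subgroup of G. If L(G) is not contained in S, then G is an Engel group (every element of G is left Engel). -/
import Mathlib


/-- Iterated commutator `[x, g, ..., g]` (with `n` copies of `g`), where
`[x,g] = x⁻¹g⁻¹xg`, `engel x g 0 = x`. -/
def engel {G : Type*} [Group G] (x g : G) : ℕ → G
  | 0 => x
  | n + 1 => (engel x g n)⁻¹ * g⁻¹ * engel x g n * g

/-- `g` is a left Engel element of `G`. -/
def IsLeftEngel {G : Type*} [Group G] (g : G) : Prop :=
  ∀ x : G, ∃ n, 1 ≤ n ∧ engel x g n = 1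

theorem stmt_7 {G : Type*} [Group G] (S : Subgroup G) (hS : S.Normal)
    (hab : ∀ a ∈ S, ∀ b ∈ S, a * b = b * a)
    (p : ℕ) (hp : p.Prime) (hidx : S.index = p)
    (L : Subgroup G) (hL : (L : Set G) = {g : G | IsLeftEngel g})
    (hns : ¬ {g : G | IsLeftEngel g} ⊆ (S : Set G)) :
    ∀ g : G, IsLeftEngel g := by
  -- every element of S is left Engel
  have hSEngel : ∀ s ∈ S, IsLeftEngel s := by
    intro s hs x
    refine ⟨2, by norm_num, ?_⟩
    set c : G := x⁻¹ * s⁻¹ * x * s with hcdef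
    have h1 : x⁻¹ * s⁻¹ * x ∈ S := by
      have := hS.conj_mem s⁻¹ (S.inv_mem hs) x⁻¹
      simpa [mul_assoc] using this
    have hc : c ∈ S := S.mul_mem h1 hs
    have hcomm : c * s = s * c := hab c hc s hs
    show c⁻¹ * s⁻¹ * c * s = 1
    rw [mul_assoc, mul_assoc, hcomm]
    group
  have hSL : S ≤ L := by
    intro s hs
    have : s ∈ (L : Set G) := by rw [hL]; exact hSEngel s hs
    exact this
  -- L contains an element outside S
  obtain ⟨g₀, hg₀E, hg₀S⟩ := Set.not_subset.mp hns
  have hg₀L : g₀ ∈ L := by rw [← SetLike.mem_coe, hL]; exact hg₀E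
  have hnotle : ¬ L ≤ S := fun h => hg₀S (h hg₀L)
  -- index argument: L = ⊤
  have hmul : S.relIndex L * L.index = S.index := Subgroup.relIndex_mul_index hSL
  have hdvd : L.index ∣ p := by rw [← hidx]; exact ⟨S.relIndex L, (hmul.symm.trans (mul_comm _ _))⟩
  have hLtop : L = ⊤ := by
    rcases (Nat.Prime.eq_one_or_self_of_dvd hp _ hdvd) with h1 | hpp
    · exact Subgroup.index_eq_one.mp h1
    · exfalso
      have : S.relIndex L * p = p := by rw [← hpp] at hidx ⊢; rw [hmul, hidx]
      have hr1 : S.relIndex L = 1 := by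
        have hp0 : p ≠ 0 := hp.ne_zero
        have := Nat.eq_of_mul_eq_mul_right (Nat.pos_of_ne_zero hp0) (this.trans (one_mul p).symm)
        exact this
      exact hnotle (Subgroup.relIndex_eq_one.mp hr1)
  intro g
  have : g ∈ (L : Set G) := by rw [hLtop]; trivial
  rw [hL] at this
  exact this
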